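/- Two regular policies coincide if and only if their state-action frequency vectors agree, i.e., x_{π,t}(s,a) = x_{π',t}(s,a) for all t, s, a implies π = π' when both π and π' are regular. -/
import Mathlib


open Finset

/-- A finite-horizon MDP with `N` states, horizon `T` (epochs `0,…,T-1`, so `T ≥ 2` has at
least one decision epoch), action sets `Fin (k s)` for each state `s`, and transition
probabilities `p t s a j = p_t(j | s, a)` governing the move from epoch `t` to `t+1`,
together with a strictly positive initial distribution `α`. -/
structure MDP (N T : ℕ) (k : Fin N → ℕ) : Type where
  p : ℕ → (s : Fin N) → Fin (k s) → Fin N → ℝ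
  α : Fin N → ℝ
  p_nonneg : ∀ t s a j, 0 ≤ p t s a j
  p_sum : ∀ t s a, ∑ j, p t s a j = 1
  α_pos : ∀ s, 0 < α s
  α_sum : ∑ s, α s = 1

/-- A (randomized, Markov, non-stationary) policy: `q t s a` is the probability that
action `a` is chosen in state `s` at decision epoch `t`. -/
structure Policy (N : ℕ) (k : Fin N → ℕ) : Type where
  q : ℕ → (s : Fin N) → Fin (k s) → ℝ
  q_nonneg : ∀ t s a, 0 ≤ q t s a
  q_sum : ∀ t s, ∑ a, q t s a = 1

variable {N T : ℕ} {k : Fin N → ℕ}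

/-- `condProb M π j t s` is `P^π(S_t = s | S_0 = j)` (epochs indexed from 0). -/
def condProb (M : MDP N T k) (π : Policy N k) (j : Fin N) : ℕ → Fin N → ℝ
  | 0, s => if s = j then 1 else 0
  | t+1, s => ∑ s', ∑ a, condProb M π j t s' * π.q t s' a * M.p t s' a s

/-- The state-action frequency `x_{π,t}(s,a) = ∑_j α(j) P^π(S_t = s, A_t = a | S_0 = j)`
(epochs indexed from 0, so the decision epochs are `0,…,T-2`). -/
def xsa (M : MDP N T k) (π : Policy N k) (t : ℕ) (s : Fin N) (a : Fin (k s)) : ℝ :=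
  ∑ j, M.α j * condProb M π j t s * π.q t s a

/-- The terminal state frequency `x_{π,T}(s)` (terminal epoch is `T-1` in 0-based indexing). -/
def xT (M : MDP N T k) (π : Policy N k) (s : Fin N) : ℝ :=
  ∑ j, M.α j * condProb M π j (T-1) s

/-- A policy is regular if at every decision epoch `t ≤ T-2` and at every state `s`
unreachable at `t`, it puts full mass on the first action. -/
def RegularPol (M : MDP N T k) (hk : ∀ s, 1 ≤ k s) (π : Policy N k) : Prop :=
  ∀ t s, t + 2 ≤ T → (∀ j, condProb M π j t s = 0) → π.q t s ⟨0, hk s⟩ = 1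

lemma condProb_nonneg (M : MDP N T k) (π : Policy N k) (j : Fin N) :
    ∀ t s, 0 ≤ condProb M π j t s := by
  intro t
  induction t with
  | zero => intro s; simp only [condProb]; split <;> norm_num
  | succ t ih =>
    intro s
    simp only [condProb]
    apply Finset.sum_nonneg; intro s' _
    apply Finset.sum_nonneg; intro a _
    exact mul_nonneg (mul_nonneg (ih s') (π.q_nonneg t s' a)) (M.p_nonneg t s' a s)

lemma q_eq_at (hk : ∀ s, 1 ≤ k s) (M : MDP N T k)
    (π π' : Policy N k) (hreg : RegularPol M hk π) (hreg' : RegularPol M hk π')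
    (hfreq : ∀ t s a, t + 2 ≤ T → xsa M π t s a = xsa M π' t s a)
    (t : ℕ) (ht : t + 2 ≤ T)
    (hc : ∀ j s, condProb M π j t s = condProb M π' j t s) :
    ∀ s a, π.q t s a = π'.q t s a := by
  intro s a
  set y := ∑ j, M.α j * condProb M π j t s with hy
  by_cases h0 : y = 0
  · have hz : ∀ j, condProb M π j t s = 0 := by
      intro j
      have hnn : ∀ i ∈ Finset.univ, 0 ≤ M.α i * condProb M π i t s := fun i _ =>
        mul_nonneg (M.α_pos i).le (condProb_nonneg M π i t s)
      have := (Finset.sum_eq_zero_iff_of_nonneg hnn).mp (hy.symm.trans h0) j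
        (Finset.mem_univ j)
      rcases mul_eq_zero.mp this with h | h
      · exact absurd h (M.α_pos j).ne'
      · exact h
    have hz' : ∀ j, condProb M π' j t s = 0 := fun j => (hc j s) ▸ hz j
    have h1 := hreg t s ht hz
    have h1' := hreg' t s ht hz'
    have key : ∀ (ρ : Policy N k), ρ.q t s ⟨0, hk s⟩ = 1 →
        ∀ b, b ≠ ⟨0, hk s⟩ → ρ.q t s b = 0 := by
      intro ρ hρ b hb
      have hsum := ρ.q_sum t s
      rw [← Finset.add_sum_erase _ _ (Finset.mem_univ ⟨0, hk s⟩), hρ] at hsum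
      have h2 : ∑ x ∈ Finset.univ.erase ⟨0, hk s⟩, ρ.q t s x = 0 := by linarith
      exact (Finset.sum_eq_zero_iff_of_nonneg (fun i _ => ρ.q_nonneg t s i)).mp h2 b
        (Finset.mem_erase.mpr ⟨hb, Finset.mem_univ b⟩)
    by_cases ha : a = ⟨0, hk s⟩
    · rw [ha, h1, h1']
    · rw [key π h1 a ha, key π' h1' a ha]
  · have hx := hfreq t s a ht
    have e1 : xsa M π t s a = y * π.q t s a := by
      rw [xsa, hy, Finset.sum_mul]
    have e2 : xsa M π' t s a = y * π'.q t s a := by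
      rw [xsa, hy]
      simp_rw [hc]
      rw [Finset.sum_mul]
    rw [e1, e2] at hx
    exact mul_left_cancel₀ h0 hx

/-- two regular policies whose state-action frequencies agree coincide
(on all decision epochs `t ≤ T-2`, i.e. `t + 2 ≤ T`, in 0-based indexing). -/
theorem regular_policies_eq_of_freq_eq (N T : ℕ) (k : Fin N → ℕ) (hk : ∀ s, 1 ≤ k s)
    (hT : 2 ≤ T) (M : MDP N T k) (π π' : Policy N k)
    (hreg : RegularPol M hk π) (hreg' : RegularPol M hk π')
    (hfreq : ∀ t s a, t + 2 ≤ T → xsa M π t s a = xsa M π' t s a) :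
    ∀ t s a, t + 2 ≤ T → π.q t s a = π'.q t s a := by
  have main : ∀ t, t + 2 ≤ T → ∀ j s, condProb M π j t s = condProb M π' j t s := by
    intro t
    induction t with
    | zero => intro _ j s; simp [condProb]
    | succ t ih =>
      intro ht j s
      have ht' : t + 2 ≤ T := by omega
      have hq := q_eq_at hk M π π' hreg hreg' hfreq t ht' (ih ht')
      simp only [condProb]
      refine Finset.sum_congr rfl fun s' _ => Finset.sum_congr rfl fun a _ => ?_
      rw [ih ht' j s', hq s' a]
  intro t s a ht
  exact q_eq_at hk M π π' hreg hreg' hfreq t ht (main t ht) s a
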